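/- Let p and q be distinct primitive words with |p| = r|q| for some integer r ≥ 2. Then p^m q is primitive for all m ≥ 2. -/

import Mathlib

variable {A : Type*}

/-- k-fold concatenation of a word with itself. -/
def pw (w : List A) : ℕ → List A
  | 0 => []
  | n + 1 => w ++ pw w n

/-- A nonempty word is primitive if it is not a proper power. -/
def Primitive (w : List A) : Prop :=
  w ≠ [] ∧ ∀ (v : List A) (m : ℕ), w = pw v m → m = 1

namespace ChuAux

/-- `t` is a period of `w`. -/
def HasPeriod (w : List A) (t : ℕ) : Prop :=
  ∀ i, i + t < w.length → w[i]? = w[i + t]?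

lemma length_pw (p : List A) : ∀ n, (pw p n).length = n * p.length
  | 0 => by simp [pw]
  | n + 1 => by simp [pw, length_pw p n]; ring

lemma pw_one (p : List A) : pw p 1 = p := by simp [pw]

lemma pw_two (p : List A) : pw p 2 = p ++ p := by simp [pw]

lemma pw_add (p : List A) (a b : ℕ) : pw p (a + b) = pw p a ++ pw p b := by
  induction a with
  | zero => simp [pw]
  | succ n ih => rw [Nat.succ_add]; simp [pw, ih]

lemma pw_mul (p : List A) (s k : ℕ) : pw (pw p s) k = pw p (s * k) := by
  induction k with
  | zero => simp [pw]
  | succ n ih =>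
    show pw p s ++ pw (pw p s) n = pw p (s * (n + 1))
    rw [ih, ← pw_add, show s + s * n = s * (n + 1) by ring]

lemma getElem?_pw (p : List A) : ∀ n i, i < n * p.length →
    (pw p n)[i]? = p[i % p.length]?
  | 0, i, h => by omega
  | n + 1, i, h => by
    have h' : i < p.length + n * p.length := by
      have : (n + 1) * p.length = p.length + n * p.length := by ring
      omega
    show (p ++ pw p n)[i]? = _
    rcases lt_or_ge i p.length with hi | hi
    · rw [List.getElem?_append_left hi, Nat.mod_eq_of_lt hi]
    · rw [List.getElem?_append_right hi, getElem?_pw p n (i - p.length) (by omega)]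
      rw [Nat.mod_eq_sub_mod hi]

lemma hasPeriod_pw (p : List A) (n : ℕ) : HasPeriod (pw p n) p.length := by
  intro i hi
  rw [length_pw] at hi
  rw [getElem?_pw p n i (by omega), getElem?_pw p n (i + p.length) hi,
    Nat.add_mod_right]

lemma hasPeriod_take (w : List A) (g n : ℕ) (h : HasPeriod w g) :
    HasPeriod (w.take n) g := by
  intro i hi
  simp only [List.length_take, lt_min_iff] at hi
  rw [List.getElem?_take_of_lt (by omega), List.getElem?_take_of_lt (by omega)]
  exact h i hi.2

lemma hasPeriod_drop (w : List A) (g : ℕ) (h : HasPeriod w g) :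
    HasPeriod (w.drop g) g := by
  intro i hi
  simp only [List.length_drop] at hi
  rw [List.getElem?_drop, List.getElem?_drop]
  rw [show g + (i + g) = (g + i) + g by ring]
  exact h (g + i) (by omega)

lemma hasPeriod_sub (w : List A) {P Q : ℕ} (hQP : Q < P) (hQ0 : 0 < Q)
    (hlen : P + Q ≤ w.length) (hP : HasPeriod w P) (hQ : HasPeriod w Q) :
    HasPeriod w (P - Q) := by
  intro i hi
  by_cases h : i + P < w.length
  · have h1 := hP i h
    have h2 := hQ (i + (P - Q)) (by omega)
    rw [show i + (P - Q) + Q = i + P by omega] at h2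
    rw [h1, h2]
  · have h1 := hQ (i - Q) (by omega)
    rw [show i - Q + Q = i by omega] at h1
    have h2 := hP (i - Q) (by omega)
    rw [show i - Q + P = i + (P - Q) by omega] at h2
    rw [← h1, h2]

lemma fine_wilf_aux : ∀ (N : ℕ) (P Q : ℕ) (w : List A), P + Q ≤ N → 0 < P → 0 < Q →
    P + Q ≤ w.length → HasPeriod w P → HasPeriod w Q → HasPeriod w (Nat.gcd P Q)
  | 0, P, Q, w, hN, hP0, _, _, _, _ => by omega
  | N + 1, P, Q, w, hN, hP0, hQ0, hlen, hP, hQ => by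
    rcases lt_trichotomy P Q with h | h | h
    · have hstep := hasPeriod_sub w h hP0 (by omega) hQ hP
      have := fine_wilf_aux N P (Q - P) w (by omega) hP0 (by omega) (by omega)
        hP hstep
      rwa [Nat.gcd_sub_self_right (le_of_lt h)] at this
    · subst h
      rwa [Nat.gcd_self]
    · have hstep := hasPeriod_sub w h hQ0 (by omega) hP hQ
      have := fine_wilf_aux N (P - Q) Q w (by omega) (by omega) hQ0 (by omega)
        hstep hQ
      rwa [← Nat.gcd_sub_self_left (le_of_lt h)]

lemma fine_wilf {P Q : ℕ} (w : List A) (hP0 : 0 < P) (hQ0 : 0 < Q)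
    (hlen : P + Q ≤ w.length) (hP : HasPeriod w P) (hQ : HasPeriod w Q) :
    HasPeriod w (Nat.gcd P Q) :=
  fine_wilf_aux (P + Q) P Q w le_rfl hP0 hQ0 hlen hP hQ

/-- A word whose length is `n * g` with period `g` is the `n`-th power of its
prefix of length `g`. -/
lemma eq_pw_of_hasPeriod (g : ℕ) (hg : 0 < g) :
    ∀ (n : ℕ) (w : List A), HasPeriod w g → w.length = n * g →
      w = pw (w.take g) n
  | 0, w, _, hlen => by
    simp only [Nat.zero_mul] at hlen
    simp [pw, List.eq_nil_of_length_eq_zero hlen]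
  | n + 1, w, hper, hlen => by
    have hdlen : (w.drop g).length = n * g := by
      simp only [List.length_drop, hlen]
      have : (n + 1) * g = n * g + g := by ring
      omega
    have hdrop := eq_pw_of_hasPeriod g hg n (w.drop g) (hasPeriod_drop w g hper) hdlen
    show w = w.take g ++ pw (w.take g) n
    rcases Nat.eq_zero_or_pos n with hn | hn
    · subst hn
      have hnil : w.drop g = [] := List.eq_nil_of_length_eq_zero (by simp [hdlen])
      rw [show pw (w.take g) 0 = ([] : List A) from rfl, List.append_nil]
      conv_lhs => rw [← List.take_append_drop g w]
      rw [hnil, List.append_nil]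
    · have htake : (w.drop g).take g = w.take g := by
        apply List.ext_getElem?
        intro i
        by_cases hi : i < g
        · rw [List.getElem?_take_of_lt hi, List.getElem?_take_of_lt hi,
            List.getElem?_drop]
          have hcond : i + g < w.length := by
            rw [hlen]
            have h1 : (n + 1) * g = n * g + g := by ring
            have hng : 1 * g ≤ n * g := Nat.mul_le_mul_right g hn
            omega
          have := hper i hcond
          rw [Nat.add_comm g i]
          exact this.symm
        · rw [List.getElem?_take_eq_none (by omega), List.getElem?_take_eq_none (by omega)]
      conv_lhs => rw [← List.take_append_drop g w]
      rw [hdrop, htake]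

lemma take_pw (p : List A) : ∀ (s m : ℕ), s ≤ m →
    (pw p m).take (s * p.length) = pw p s
  | 0, m, _ => by simp [pw]
  | s + 1, 0, h => by omega
  | s + 1, m + 1, h => by
    show (p ++ pw p m).take ((s+1) * p.length) = p ++ pw p s
    rw [show (s+1) * p.length = p.length + s * p.length by ring, List.take_length_add_append]
    rw [take_pw p s m (by omega)]

/-- Key equational lemma for the boundary case: if `a ++ p ++ a = p ++ q` and
`|p|` is a multiple of `|a|`, then `q = a ++ a`. -/
lemma square_tail (a q : List A) : ∀ (n : ℕ) (p : List A),
    p.length = n * a.length → a ++ (p ++ a) = p ++ q → q = a ++ a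
  | 0, p, hlen, heq => by
    simp only [Nat.zero_mul] at hlen
    simp [List.eq_nil_of_length_eq_zero hlen] at heq
    exact heq.symm
  | n + 1, p, hlen, heq => by
    by_cases ha : a = []
    · subst ha
      simp only [List.nil_append, List.append_nil] at heq
      have hl := congrArg List.length heq
      simp only [List.length_append] at hl
      have hq0 : q.length = 0 := by omega
      simp [List.eq_nil_of_length_eq_zero hq0]
    · have ha0 : 0 < a.length := List.length_pos_iff.mpr ha
      have hpa : a.length ≤ p.length := by
        rw [hlen]
        have : 1 * a.length ≤ (n + 1) * a.length := Nat.mul_le_mul_right _ (by omega)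
        omega
      have htk : p.take a.length = a := by
        have h2 := congrArg (List.take a.length) heq
        rw [List.take_append_of_le_length (by simp),
          List.take_append_of_le_length hpa] at h2
        simpa using h2.symm
      have hsplit : p = a ++ p.drop a.length := by
        conv_lhs => rw [← List.take_append_drop a.length p, htk]
      have hlen' : (p.drop a.length).length = n * a.length := by
        simp only [List.length_drop, hlen]
        have : (n + 1) * a.length = n * a.length + a.length := by ring
        omega
      apply square_tail a q n (p.drop a.length) hlen'
      have heq2 : a ++ ((a ++ p.drop a.length) ++ a) = (a ++ p.drop a.length) ++ q := by
        rw [← hsplit]; exact heq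
      apply List.append_cancel_left (as := a)
      simpa [List.append_assoc] using heq2

end ChuAux

open ChuAux in
theorem chu_shyr_yu_ppow_q (p q : List A) (hp : Primitive p) (hq : Primitive q)
    (hpq : p ≠ q) (r : ℕ) (hr : 2 ≤ r) (hlen : p.length = r * q.length)
    (m : ℕ) (hm : 2 ≤ m) :
    Primitive (pw p m ++ q) := by
  obtain ⟨hpne, hpprim⟩ := hp
  obtain ⟨hqne, hqprim⟩ := hq
  have hnp : 0 < p.length := List.length_pos_iff.mpr hpne
  have hnq : 0 < q.length := List.length_pos_iff.mpr hqne
  have hqp : 2 * q.length ≤ p.length := by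
    rw [hlen]; exact Nat.mul_le_mul_right _ hr
  have hq_lt : q.length < p.length := by omega
  have hW : (pw p m ++ q).length = m * p.length + q.length := by
    simp [length_pw]
  have hmm : 2 * p.length ≤ m * p.length := Nat.mul_le_mul_right _ hm
  refine ⟨?_, ?_⟩
  · intro h
    have h2 := congrArg List.length h
    rw [hW] at h2
    simp only [List.length_nil] at h2
    omega
  intro v k hwk
  by_contra hk1
  have hvlen : k * v.length = m * p.length + q.length := by
    have h2 := congrArg List.length hwk
    rw [hW, length_pw] at h2
    omega
  have hk0 : k ≠ 0 := by
    intro h; subst h; simp at hvlen; omega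
  have hk2 : 2 ≤ k := by omega
  have hnv0 : 0 < v.length := by
    rcases Nat.eq_zero_or_pos v.length with h | h
    · rw [h, Nat.mul_zero] at hvlen; omega
    · exact h
  have hpref : pw p m = (pw v k).take (m * p.length) := by
    rw [← hwk, List.take_append_of_le_length (le_of_eq (length_pw p m).symm),
      ← length_pw p m, List.take_length]
  have hperv : HasPeriod (pw p m) v.length := by
    rw [hpref]; exact hasPeriod_take _ _ _ (hasPeriod_pw v k)
  have hsum : p.length + (m - 1) * p.length = m * p.length := by
    have h1 : m - 1 + 1 = m := by omega
    calc p.length + (m - 1) * p.length = (m - 1 + 1) * p.length := by ring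
      _ = m * p.length := by rw [h1]
  by_cases hA : v.length ≤ (m - 1) * p.length
  · -- Fine–Wilf case
    have hfwlen : p.length + v.length ≤ (pw p m).length := by
      rw [length_pw]; omega
    have hg := fine_wilf (pw p m) hnp hnv0 hfwlen (hasPeriod_pw p m) hperv
    have hg0 : 0 < Nat.gcd p.length v.length := Nat.gcd_pos_of_pos_left _ hnp
    have hgnp : Nat.gcd p.length v.length ∣ p.length := Nat.gcd_dvd_left _ _
    have hpe : p = (pw p m).take p.length := by
      rw [show p.length = 1 * p.length by ring, take_pw p 1 m (by omega), pw_one]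
    have hpg : HasPeriod p (Nat.gcd p.length v.length) := by
      have h := hasPeriod_take (pw p m) (Nat.gcd p.length v.length) p.length hg
      rwa [← hpe] at h
    have hppow := eq_pw_of_hasPeriod _ hg0 (p.length / Nat.gcd p.length v.length) p hpg
      (Nat.div_mul_cancel hgnp).symm
    have hone := hpprim _ _ hppow
    have hgeq : Nat.gcd p.length v.length = p.length := by
      have h := Nat.mul_div_cancel' hgnp
      rw [hone, Nat.mul_one] at h
      exact h
    have hdvd : p.length ∣ v.length := hgeq ▸ Nat.gcd_dvd_right p.length v.length
    rcases hdvd with ⟨s, hs⟩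
    rw [Nat.mul_comm] at hs
    have hs_le : s ≤ m := by
      have h1 : s * p.length ≤ (m - 1) * p.length := by omega
      have h2 : s * p.length ≤ m * p.length :=
        h1.trans (Nat.mul_le_mul_right _ (by omega))
      exact Nat.le_of_mul_le_mul_right h2 hnp
    have hveq : v = pw p s := by
      have h2 : pw v k = v ++ pw v (k - 1) := by
        conv_lhs => rw [show k = 1 + (k - 1) by omega]
        rw [pw_add, pw_one]
      have h1 : v = (pw v k).take v.length := by
        rw [h2, List.take_left]
      rw [h1, ← hwk, List.take_append_of_le_length (by rw [length_pw]; omega),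
        hs, take_pw p s m hs_le]
    rw [hveq, pw_mul] at hwk
    have hlen2 := congrArg List.length hwk
    rw [hW, length_pw] at hlen2
    have hnpdvd : p.length ∣ q.length := by
      have h1 : p.length ∣ s * k * p.length := dvd_mul_left _ _
      have h2 : p.length ∣ m * p.length := dvd_mul_left _ _
      rw [← hlen2] at h1
      exact (Nat.dvd_add_right h2).mp h1
    have := Nat.le_of_dvd hnq hnpdvd
    omega
  · -- overlap case: m = 2, k = 2
    push_neg at hA
    have hm2 : m = 2 := by
      have h1 : 2 * v.length ≤ k * v.length := Nat.mul_le_mul_right _ hk2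
      by_contra hne
      have hm3 : 3 ≤ m := by omega
      have h5 : (m + 1) * p.length ≤ 2 * ((m - 1) * p.length) := by
        have h6 : m + 1 ≤ 2 * (m - 1) := by omega
        calc (m + 1) * p.length ≤ (2 * (m - 1)) * p.length :=
              Nat.mul_le_mul_right _ h6
          _ = 2 * ((m - 1) * p.length) := by ring
      have h7 : m * p.length + p.length = (m + 1) * p.length := by ring
      omega
    subst hm2
    have hA' : p.length < v.length := by omega
    have hkeq : k = 2 := by
      by_contra h
      have h3 : 3 ≤ k := by omega
      have h4 : 3 * v.length ≤ k * v.length := Nat.mul_le_mul_right _ h3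
      omega
    subst hkeq
    have h2nv : 2 * v.length = 2 * p.length + q.length := by omega
    have ht1 : 1 ≤ v.length - p.length := by omega
    set t := v.length - p.length with ht
    have hnq2t : q.length = 2 * t := by omega
    have htnp : t ≤ p.length := by omega
    have ha_len : (p.take t).length = t := by rw [List.length_take]; omega
    have hveq : v = p ++ p.take t := by
      have h1 : v = (pw v 2).take v.length := by
        rw [pw_two]; exact (List.take_left (l₁ := v) (l₂ := v)).symm
      rw [h1, ← hwk, pw_two, List.append_assoc,
        show v.length = p.length + t by omega, List.take_length_add_append,
        List.take_append_of_le_length htnp]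
    rw [pw_two, pw_two, hveq] at hwk
    have heq : p.take t ++ (p ++ p.take t) = p ++ q := by
      apply List.append_cancel_left (as := p)
      simpa only [List.append_assoc] using hwk.symm
    have hq_eq : q = p.take t ++ p.take t := by
      apply square_tail (p.take t) q (2 * r) p ?_ heq
      rw [hlen, hnq2t, ha_len]; ring
    have h21 := hqprim (p.take t) 2 (by rw [pw_two]; exact hq_eq)
    omega
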